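/- In O_q(B⁺) the elements z_{ij} = X_{ij}X_{jj}⁻¹ (1 ≤ i < j ≤ n+1) satisfy: z_{ij}z_{im} = q z_{im}z_{ij} for j < m; z_{ij}z_{lj} = q z_{lj}z_{ij} for i < l; z_{ij}z_{lm} = z_{lm}z_{ij} for i < l and j > m; and for i < l and j < m: z_{ij}z_{lm} = z_{lm}z_{ij} if j < l, z_{ij}z_{lm} = q⁻¹z_{lm}z_{ij} + q⁻¹q̂ z_{im} if j = l, and z_{ij}z_{lm} = z_{lm}z_{ij} + q̂ z_{im}z_{lj} if j > l. -/

import Mathlib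

open scoped TensorProduct

noncomputable section

namespace QSL

/-- The generator `X i j` of the free algebra underlying `O_q(SL_{n+1})`. -/
def Xf (k : Type) [Field k] (n : ℕ) (i j : Fin (n+1)) :
    FreeAlgebra k (Fin (n+1) × Fin (n+1)) :=
  FreeAlgebra.ι k (i, j)

/-- The number of inversions (the length `ℓ(σ)`) of a permutation. -/
def invCount {m : ℕ} (σ : Equiv.Perm (Fin m)) : ℕ :=
  (Finset.univ.filter (fun p : Fin m × Fin m => p.1 < p.2 ∧ σ p.2 < σ p.1)).card

/-- The quantum determinant `∑_σ (-q)^{ℓ(σ)} X_{1σ(1)} ⋯ X_{n+1,σ(n+1)}`. -/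
def qdet (k : Type) [Field k] (q : k) (n : ℕ) : FreeAlgebra k (Fin (n+1) × Fin (n+1)) :=
  ∑ σ : Equiv.Perm (Fin (n+1)),
    ((-q) ^ invCount σ) • (List.ofFn fun i => Xf k n i (σ i)).prod

/-- Defining relations of `O_q(SL_{n+1})`. -/
inductive SLRel (k : Type) [Field k] (q : k) (n : ℕ) :
    FreeAlgebra k (Fin (n+1) × Fin (n+1)) → FreeAlgebra k (Fin (n+1) × Fin (n+1)) → Prop
  | row {i j m : Fin (n+1)} (h : j < m) :
      SLRel k q n (Xf k n i j * Xf k n i m) (q • (Xf k n i m * Xf k n i j))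
  | col {i l j : Fin (n+1)} (h : i < l) :
      SLRel k q n (Xf k n i j * Xf k n l j) (q • (Xf k n l j * Xf k n i j))
  | swap {i l j m : Fin (n+1)} (h1 : i < l) (h2 : m < j) :
      SLRel k q n (Xf k n i j * Xf k n l m) (Xf k n l m * Xf k n i j)
  | mixed {i l j m : Fin (n+1)} (h1 : i < l) (h2 : j < m) :
      SLRel k q n (Xf k n i j * Xf k n l m)
        (Xf k n l m * Xf k n i j + (q - q⁻¹) • (Xf k n i m * Xf k n l j))
  | det : SLRel k q n (qdet k q n) 1

/-- The quantized coordinate ring `O_q(SL_{n+1})`. -/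
abbrev OqSL (k : Type) [Field k] (q : k) (n : ℕ) := RingQuot (SLRel k q n)

/-- The generator `X i j` of `O_q(SL_{n+1})`. -/
def XSL (k : Type) [Field k] (q : k) (n : ℕ) (i j : Fin (n+1)) : OqSL k q n :=
  RingQuot.mkAlgHom k (SLRel k q n) (Xf k n i j)

/-- Relations `X i j = 0` for `i > j`, defining `O_q(B⁺)`. -/
inductive BpRel (k : Type) [Field k] (q : k) (n : ℕ) : OqSL k q n → OqSL k q n → Prop
  | zero {i j : Fin (n+1)} (h : j < i) : BpRel k q n (XSL k q n i j) 0

/-- Relations `X i j = 0` for `i < j`, defining `O_q(B⁻)`. -/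
inductive BmRel (k : Type) [Field k] (q : k) (n : ℕ) : OqSL k q n → OqSL k q n → Prop
  | zero {i j : Fin (n+1)} (h : i < j) : BmRel k q n (XSL k q n i j) 0

/-- Relations `X i j = 0` for `i ≠ j`, defining `O_q(T)`. -/
inductive TRel (k : Type) [Field k] (q : k) (n : ℕ) : OqSL k q n → OqSL k q n → Prop
  | zero {i j : Fin (n+1)} (h : i ≠ j) : TRel k q n (XSL k q n i j) 0

/-- The quantized coordinate ring `O_q(B⁺)` of the positive Borel. -/
abbrev OqBp (k : Type) [Field k] (q : k) (n : ℕ) := RingQuot (BpRel k q n)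

/-- The quantized coordinate ring `O_q(B⁻)` of the negative Borel. -/
abbrev OqBm (k : Type) [Field k] (q : k) (n : ℕ) := RingQuot (BmRel k q n)

/-- The quantized coordinate ring `O_q(T)` of the maximal torus. -/
abbrev OqT (k : Type) [Field k] (q : k) (n : ℕ) := RingQuot (TRel k q n)

/-- The coset of `X i j` in `O_q(B⁺)`. -/
def XBp (k : Type) [Field k] (q : k) (n : ℕ) (i j : Fin (n+1)) : OqBp k q n :=
  RingQuot.mkAlgHom k (BpRel k q n) (XSL k q n i j)

/-- The coset of `X i j` in `O_q(B⁻)`. -/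
def XBm (k : Type) [Field k] (q : k) (n : ℕ) (i j : Fin (n+1)) : OqBm k q n :=
  RingQuot.mkAlgHom k (BmRel k q n) (XSL k q n i j)

/-- The coset `Y i i` of `X i i` in `O_q(T)`. -/
def YT (k : Type) [Field k] (q : k) (n : ℕ) (i : Fin (n+1)) : OqT k q n :=
  RingQuot.mkAlgHom k (TRel k q n) (XSL k q n i i)

/-- `y i j = X_{ii}⁻¹ X_{ij}` in `O_q(B⁺)`. -/
def yY (k : Type) [Field k] (q : k) (n : ℕ) (i j : Fin (n+1)) : OqBp k q n :=
  Ring.inverse (XBp k q n i i) * XBp k q n i j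

/-- `z i j = X_{ij} X_{jj}⁻¹` in `O_q(B⁺)`. -/
def zZ (k : Type) [Field k] (q : k) (n : ℕ) (i j : Fin (n+1)) : OqBp k q n :=
  XBp k q n i j * Ring.inverse (XBp k q n j j)

/-- The subalgebra `O_q(N⁺)` of `O_q(B⁺)`, generated by the `X_{ii}⁻¹X_{ij}`, `i < j`. -/
def OqNp (k : Type) [Field k] (q : k) (n : ℕ) : Subalgebra k (OqBp k q n) :=
  Algebra.adjoin k {a | ∃ i j : Fin (n+1), i < j ∧ a = yY k q n i j}

/-- The subalgebra `O_q(N⁺)'` of `O_q(B⁺)`, generated by the `X_{ij}X_{jj}⁻¹`, `i < j`. -/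
def OqNp' (k : Type) [Field k] (q : k) (n : ℕ) : Subalgebra k (OqBp k q n) :=
  Algebra.adjoin k {a | ∃ i j : Fin (n+1), i < j ∧ a = zZ k q n i j}

/-- `X_{jj}⁻¹ X_{ji}` in `O_q(B⁻)` (for `i < j`). -/
def yNm (k : Type) [Field k] (q : k) (n : ℕ) (i j : Fin (n+1)) : OqBm k q n :=
  Ring.inverse (XBm k q n j j) * XBm k q n j i

/-- `X_{ji} X_{ii}⁻¹` in `O_q(B⁻)` (for `i < j`). -/
def zNm (k : Type) [Field k] (q : k) (n : ℕ) (i j : Fin (n+1)) : OqBm k q n :=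
  XBm k q n j i * Ring.inverse (XBm k q n i i)

/-- The subalgebra `O_q(N⁻)` of `O_q(B⁻)`, generated by the `X_{jj}⁻¹X_{ji}`, `i < j`. -/
def OqNm (k : Type) [Field k] (q : k) (n : ℕ) : Subalgebra k (OqBm k q n) :=
  Algebra.adjoin k {a | ∃ i j : Fin (n+1), i < j ∧ a = yNm k q n i j}

/-- The subalgebra `O_q(N⁻)'` of `O_q(B⁻)`, generated by the `X_{ji}X_{ii}⁻¹`, `i < j`. -/
def OqNm' (k : Type) [Field k] (q : k) (n : ℕ) : Subalgebra k (OqBm k q n) :=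
  Algebra.adjoin k {a | ∃ i j : Fin (n+1), i < j ∧ a = zNm k q n i j}

end QSL


namespace QSL

section Aux

variable {k : Type} [Field k] {q : k} {n : ℕ}

/-- The composite map from the free algebra to `O_q(B⁺)`. -/
def piB (k : Type) [Field k] (q : k) (n : ℕ) :
    FreeAlgebra k (Fin (n+1) × Fin (n+1)) →ₐ[k] OqBp k q n :=
  (RingQuot.mkAlgHom k (BpRel k q n)).comp (RingQuot.mkAlgHom k (SLRel k q n))

lemma piB_Xf (i j : Fin (n+1)) : piB k q n (Xf k n i j) = XBp k q n i j := by
  simp [piB, XBp, XSL]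

lemma Xrow {i j m : Fin (n+1)} (h : j < m) :
    XBp k q n i j * XBp k q n i m = q • (XBp k q n i m * XBp k q n i j) := by
  have h2 : piB k q n (Xf k n i j * Xf k n i m)
      = piB k q n (q • (Xf k n i m * Xf k n i j)) := by
    simp only [piB, AlgHom.comp_apply]
    exact congrArg _ (RingQuot.mkAlgHom_rel k (SLRel.row h))
  simpa only [map_mul, map_smul, piB_Xf] using h2

lemma Xcol {i l j : Fin (n+1)} (h : i < l) :
    XBp k q n i j * XBp k q n l j = q • (XBp k q n l j * XBp k q n i j) := by
  have h2 : piB k q n (Xf k n i j * Xf k n l j)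
      = piB k q n (q • (Xf k n l j * Xf k n i j)) := by
    simp only [piB, AlgHom.comp_apply]
    exact congrArg _ (RingQuot.mkAlgHom_rel k (SLRel.col h))
  simpa only [map_mul, map_smul, piB_Xf] using h2

lemma Xswap {i l j m : Fin (n+1)} (h1 : i < l) (h2 : m < j) :
    XBp k q n i j * XBp k q n l m = XBp k q n l m * XBp k q n i j := by
  have h3 : piB k q n (Xf k n i j * Xf k n l m)
      = piB k q n (Xf k n l m * Xf k n i j) := by
    simp only [piB, AlgHom.comp_apply]
    exact congrArg _ (RingQuot.mkAlgHom_rel k (SLRel.swap h1 h2))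
  simpa only [map_mul, piB_Xf] using h3

lemma Xmixed {i l j m : Fin (n+1)} (h1 : i < l) (h2 : j < m) :
    XBp k q n i j * XBp k q n l m
      = XBp k q n l m * XBp k q n i j
        + (q - q⁻¹) • (XBp k q n i m * XBp k q n l j) := by
  have h3 : piB k q n (Xf k n i j * Xf k n l m)
      = piB k q n (Xf k n l m * Xf k n i j + (q - q⁻¹) • (Xf k n i m * Xf k n l j)) := by
    simp only [piB, AlgHom.comp_apply]
    exact congrArg _ (RingQuot.mkAlgHom_rel k (SLRel.mixed h1 h2))
  simpa only [map_mul, map_add, map_smul, piB_Xf] using h3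

lemma Xzero {i j : Fin (n+1)} (h : j < i) : XBp k q n i j = 0 := by
  have h2 := RingQuot.mkAlgHom_rel k (BpRel.zero (k := k) (q := q) (n := n) h)
  simpa [XBp] using h2

lemma perm_exists_lt {m : ℕ} {σ : Equiv.Perm (Fin m)} (h : σ ≠ 1) : ∃ i, σ i < i := by
  by_contra hc
  push_neg at hc
  have hsum : ∑ i : Fin m, (i : ℕ) = ∑ i : Fin m, ((σ i : ℕ)) :=
    (Equiv.sum_comp σ fun i => (i : ℕ)).symm
  have heq := (Finset.sum_eq_sum_iff_of_le (fun i _ => Fin.le_def.mp (hc i))).mp hsum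
  exact h (Equiv.ext fun i => by
    rw [Equiv.Perm.one_apply]
    exact Fin.ext (heq i (Finset.mem_univ i)).symm)

lemma invCount_one {m : ℕ} : invCount (1 : Equiv.Perm (Fin m)) = 0 := by
  rw [invCount, Finset.card_eq_zero, Finset.filter_eq_empty_iff]
  rintro p -
  rintro ⟨h1, h2⟩
  rw [Equiv.Perm.one_apply, Equiv.Perm.one_apply] at h2
  exact absurd (h1.trans h2) (lt_irrefl _)

lemma prodDiag : (List.ofFn fun i : Fin (n+1) => XBp k q n i i).prod = 1 := by
  have hdet : piB k q n (qdet k q n) = piB k q n 1 := by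
    simp only [piB, AlgHom.comp_apply]
    exact congrArg _ (RingQuot.mkAlgHom_rel k SLRel.det)
  rw [map_one] at hdet
  have key : piB k q n (qdet k q n)
      = (List.ofFn fun i : Fin (n+1) => XBp k q n i i).prod := by
    rw [qdet, map_sum]
    rw [Finset.sum_eq_single_of_mem (1 : Equiv.Perm (Fin (n+1))) (Finset.mem_univ _) ?_]
    · rw [invCount_one, pow_zero, one_smul, map_list_prod, List.map_ofFn]
      simp only [Function.comp_def, Equiv.Perm.one_apply, piB_Xf]
    · intro σ _ hσ
      obtain ⟨i, hi⟩ := perm_exists_lt hσ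
      rw [map_smul, map_list_prod, List.map_ofFn]
      have h0 : (0 : OqBp k q n) ∈ List.ofFn (piB k q n ∘ fun i => Xf k n i (σ i)) := by
        rw [List.mem_ofFn]
        exact ⟨i, by simp [Function.comp, piB_Xf, Xzero hi]⟩
      rw [List.prod_eq_zero h0, smul_zero]
  rw [← key, hdet]

lemma diag_commute (i j : Fin (n+1)) :
    Commute (XBp k q n i i) (XBp k q n j j) := by
  have key : ∀ a b : Fin (n+1), a < b →
      XBp k q n a a * XBp k q n b b = XBp k q n b b * XBp k q n a a := by
    intro a b hab
    have h := Xmixed (k := k) (q := q) (n := n) (i := a) (l := b) (j := a) (m := b) hab hab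
    rwa [Xzero hab, mul_zero, smul_zero, add_zero] at h
  rcases lt_trichotomy i j with h | rfl | h
  · exact key i j h
  · exact Commute.refl _
  · exact (key j i h).symm

lemma listfactor {M : Type*} [Monoid M] :
    ∀ (l : List M) (x : M), x ∈ l → (∀ y ∈ l, Commute x y) →
      ∃ c, l.prod = x * c ∧ Commute x c := by
  intro l
  induction l with
  | nil => intro x hx; exact absurd hx List.not_mem_nil
  | cons h t ih =>
    intro x hx hcomm
    rcases List.mem_cons.mp hx with rfl | hxt
    · exact ⟨t.prod, by rw [List.prod_cons],
        Commute.list_prod_right _ _ fun y hy => hcomm y (List.mem_cons_of_mem _ hy)⟩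
    · obtain ⟨c, hc, hxc⟩ := ih x hxt (fun y hy => hcomm y (List.mem_cons_of_mem _ hy))
      have hxh : Commute x h := hcomm h List.mem_cons_self
      refine ⟨h * c, ?_, hxh.mul_right hxc⟩
      rw [List.prod_cons, hc, ← mul_assoc, ← hxh.eq, mul_assoc]

lemma diag_isUnit (j : Fin (n+1)) : IsUnit (XBp k q n j j) := by
  obtain ⟨c, hc, hcomm⟩ := listfactor (List.ofFn fun i : Fin (n+1) => XBp k q n i i)
    (XBp k q n j j)
    (List.mem_ofFn.mpr ⟨j, rfl⟩)
    (by intro y hy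
        obtain ⟨i, rfl⟩ := List.mem_ofFn.mp hy
        exact diag_commute j i)
  rw [prodDiag] at hc
  exact ⟨⟨XBp k q n j j, c, hc.symm, by rw [← hcomm.eq]; exact hc.symm⟩, rfl⟩

lemma conj_inv {a d : OqBp k q n} {r : k} (hd : IsUnit d)
    (h : a * d = r • (d * a)) :
    Ring.inverse d * a = r • (a * Ring.inverse d) := by
  calc Ring.inverse d * a
      = Ring.inverse d * a * (d * Ring.inverse d) := by
        rw [Ring.mul_inverse_cancel d hd, mul_one]
    _ = Ring.inverse d * (a * d) * Ring.inverse d := by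
        simp only [mul_assoc]
    _ = Ring.inverse d * (r • (d * a)) * Ring.inverse d := by rw [h]
    _ = r • (Ring.inverse d * d * (a * Ring.inverse d)) := by
        simp only [mul_smul_comm, smul_mul_assoc, mul_assoc]
    _ = r • (a * Ring.inverse d) := by
        rw [Ring.inverse_mul_cancel d hd, one_mul]

lemma comm_inv {a d : OqBp k q n} (hd : IsUnit d)
    (h : d * a = a * d) :
    Ring.inverse d * a = a * Ring.inverse d := by
  have h2 : a * d = (1 : k) • (d * a) := by rw [one_smul, h]
  simpa using conj_inv hd h2

lemma Xdiag_comm {j l m : Fin (n+1)} (hjl : j ≠ l) (hjm : j ≠ m) :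
    XBp k q n j j * XBp k q n l m = XBp k q n l m * XBp k q n j j := by
  rcases lt_or_ge m l with hml | hlm
  · rw [Xzero hml, mul_zero, zero_mul]
  · rcases lt_or_gt_of_ne hjl with h | h
    · have h2 := Xmixed (k := k) (q := q) (n := n) (i := j) (l := l) (j := j) (m := m) h (lt_of_lt_of_le h hlm)
      rwa [Xzero h, mul_zero, smul_zero, add_zero] at h2
    · rcases lt_or_gt_of_ne hjm with h2 | h2
      · exact (Xswap (k := k) (q := q) (n := n) (i := l) (l := j) (j := m) (m := j) h h2).symm
      · have h3 := Xmixed (k := k) (q := q) (n := n) (i := l) (l := j) (j := m) (m := j) h h2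
        rw [Xzero h2, mul_zero, smul_zero, add_zero] at h3
        exact h3.symm

lemma D_comm {j l m : Fin (n+1)} (hjl : j ≠ l) (hjm : j ≠ m) :
    Ring.inverse (XBp k q n j j) * XBp k q n l m
      = XBp k q n l m * Ring.inverse (XBp k q n j j) :=
  comm_inv (diag_isUnit j) (Xdiag_comm hjl hjm)

lemma D_row (hq0 : q ≠ 0) {j m : Fin (n+1)} (h : j < m) :
    Ring.inverse (XBp k q n j j) * XBp k q n j m
      = q⁻¹ • (XBp k q n j m * Ring.inverse (XBp k q n j j)) := by
  apply conj_inv (diag_isUnit j)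
  rw [Xrow h, smul_smul, inv_mul_cancel₀ hq0, one_smul]

lemma D_col {l j : Fin (n+1)} (h : l < j) :
    Ring.inverse (XBp k q n j j) * XBp k q n l j
      = q • (XBp k q n l j * Ring.inverse (XBp k q n j j)) :=
  conj_inv (diag_isUnit j) (Xcol (k := k) (q := q) (n := n) (i := l) (l := j) (j := j) h)

lemma DD_comm {j m : Fin (n+1)} (h : j ≠ m) :
    Ring.inverse (XBp k q n j j) * Ring.inverse (XBp k q n m m)
      = Ring.inverse (XBp k q n m m) * Ring.inverse (XBp k q n j j) := by
  have h1 : XBp k q n m m * Ring.inverse (XBp k q n j j)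
      = Ring.inverse (XBp k q n j j) * XBp k q n m m :=
    (comm_inv (diag_isUnit j) (Xdiag_comm h h)).symm
  exact (comm_inv (diag_isUnit m) h1).symm

lemma comm3 {a b : OqBp k q n} (h : a * b = b * a) (c : OqBp k q n) :
    a * (b * c) = b * (a * c) := by
  rw [← mul_assoc, h, mul_assoc]

lemma qcomm3 {a b : OqBp k q n} {r : k}
    (h : a * b = r • (b * a)) (c : OqBp k q n) :
    a * (b * c) = r • (b * (a * c)) := by
  rw [← mul_assoc, h, smul_mul_assoc, mul_assoc]

lemma mixed3 {a b c e : OqBp k q n} {s : k}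
    (h : a * b = b * a + s • (c * e)) (t : OqBp k q n) :
    a * (b * t) = b * (a * t) + s • (c * (e * t)) := by
  rw [← mul_assoc, h, add_mul, smul_mul_assoc, mul_assoc, mul_assoc]

lemma msc (r : k) (x y : OqBp k q n) : x * r • y = r • (x * y) :=
  mul_smul_comm r x y

lemma XjjDD (j m : Fin (n+1)) :
    XBp k q n j j * (Ring.inverse (XBp k q n j j) * Ring.inverse (XBp k q n m m))
      = Ring.inverse (XBp k q n m m) := by
  rw [← mul_assoc, Ring.mul_inverse_cancel _ (diag_isUnit j), one_mul]

lemma zrel1 {i j m : Fin (n+1)} (hij : i < j) (hjm : j < m) :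
    zZ k q n i j * zZ k q n i m = q • (zZ k q n i m * zZ k q n i j) := by
  simp only [zZ]
  calc XBp k q n i j * Ring.inverse (XBp k q n j j) * (XBp k q n i m * Ring.inverse (XBp k q n m m))
      = XBp k q n i j * (Ring.inverse (XBp k q n j j) * (XBp k q n i m * Ring.inverse (XBp k q n m m))) := by rw [mul_assoc]
    _ = XBp k q n i j * (XBp k q n i m * (Ring.inverse (XBp k q n j j) * Ring.inverse (XBp k q n m m))) := by
        rw [comm3 (D_comm hij.ne' hjm.ne) _]
    _ = q • (XBp k q n i m * (XBp k q n i j * (Ring.inverse (XBp k q n j j) * Ring.inverse (XBp k q n m m)))) := by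
        rw [qcomm3 (Xrow (i := i) hjm) _]
    _ = q • (XBp k q n i m * (XBp k q n i j * (Ring.inverse (XBp k q n m m) * Ring.inverse (XBp k q n j j)))) := by
        rw [DD_comm hjm.ne]
    _ = q • (XBp k q n i m * (Ring.inverse (XBp k q n m m) * (XBp k q n i j * Ring.inverse (XBp k q n j j)))) := by
        rw [comm3 (D_comm (hij.trans hjm).ne' hjm.ne') _]
    _ = q • (XBp k q n i m * Ring.inverse (XBp k q n m m) * (XBp k q n i j * Ring.inverse (XBp k q n j j))) := by rw [mul_assoc]

lemma zrel2 {i l j : Fin (n+1)} (hil : i < l) (hlj : l < j) :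
    zZ k q n i j * zZ k q n l j = q • (zZ k q n l j * zZ k q n i j) := by
  simp only [zZ]
  calc XBp k q n i j * Ring.inverse (XBp k q n j j) * (XBp k q n l j * Ring.inverse (XBp k q n j j))
      = XBp k q n i j * (Ring.inverse (XBp k q n j j) * (XBp k q n l j * Ring.inverse (XBp k q n j j))) := by rw [mul_assoc]
    _ = XBp k q n i j * (q • (XBp k q n l j * (Ring.inverse (XBp k q n j j) * Ring.inverse (XBp k q n j j)))) := by
        rw [qcomm3 (D_col hlj) _]
    _ = q • (XBp k q n i j * (XBp k q n l j * (Ring.inverse (XBp k q n j j) * Ring.inverse (XBp k q n j j)))) := by rw [msc]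
    _ = q • (q • (XBp k q n l j * (XBp k q n i j * (Ring.inverse (XBp k q n j j) * Ring.inverse (XBp k q n j j))))) := by
        rw [qcomm3 (Xcol (j := j) hil) _]
    _ = q • (XBp k q n l j * (q • (XBp k q n i j * (Ring.inverse (XBp k q n j j) * Ring.inverse (XBp k q n j j))))) := by rw [msc]
    _ = q • (XBp k q n l j * (Ring.inverse (XBp k q n j j) * (XBp k q n i j * Ring.inverse (XBp k q n j j)))) := by
        rw [qcomm3 (D_col (hil.trans hlj)) _]
    _ = q • (XBp k q n l j * Ring.inverse (XBp k q n j j) * (XBp k q n i j * Ring.inverse (XBp k q n j j))) := by rw [mul_assoc]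

lemma zrel3 {i l m j : Fin (n+1)} (hil : i < l) (hlm : l < m) (hmj : m < j) :
    zZ k q n i j * zZ k q n l m = zZ k q n l m * zZ k q n i j := by
  simp only [zZ]
  calc XBp k q n i j * Ring.inverse (XBp k q n j j) * (XBp k q n l m * Ring.inverse (XBp k q n m m))
      = XBp k q n i j * (Ring.inverse (XBp k q n j j) * (XBp k q n l m * Ring.inverse (XBp k q n m m))) := by rw [mul_assoc]
    _ = XBp k q n i j * (XBp k q n l m * (Ring.inverse (XBp k q n j j) * Ring.inverse (XBp k q n m m))) := by
        rw [comm3 (D_comm (hlm.trans hmj).ne' hmj.ne') _]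
    _ = XBp k q n l m * (XBp k q n i j * (Ring.inverse (XBp k q n j j) * Ring.inverse (XBp k q n m m))) := by
        rw [comm3 (Xswap hil hmj) _]
    _ = XBp k q n l m * (XBp k q n i j * (Ring.inverse (XBp k q n m m) * Ring.inverse (XBp k q n j j))) := by
        rw [DD_comm hmj.ne']
    _ = XBp k q n l m * (Ring.inverse (XBp k q n m m) * (XBp k q n i j * Ring.inverse (XBp k q n j j))) := by
        rw [comm3 (D_comm (hil.trans hlm).ne' hmj.ne) _]
    _ = XBp k q n l m * Ring.inverse (XBp k q n m m) * (XBp k q n i j * Ring.inverse (XBp k q n j j)) := by rw [mul_assoc]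

lemma zrel4 {i j l m : Fin (n+1)} (hij : i < j) (hjl : j < l) (hlm : l < m) :
    zZ k q n i j * zZ k q n l m = zZ k q n l m * zZ k q n i j := by
  have hswap : XBp k q n i j * XBp k q n l m = XBp k q n l m * XBp k q n i j := by
    have h := Xmixed (k := k) (q := q) (n := n) (i := i) (l := l) (j := j) (m := m)
      (hij.trans hjl) (hjl.trans hlm)
    rwa [Xzero hjl, mul_zero, smul_zero, add_zero] at h
  simp only [zZ]
  calc XBp k q n i j * Ring.inverse (XBp k q n j j) * (XBp k q n l m * Ring.inverse (XBp k q n m m))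
      = XBp k q n i j * (Ring.inverse (XBp k q n j j) * (XBp k q n l m * Ring.inverse (XBp k q n m m))) := by rw [mul_assoc]
    _ = XBp k q n i j * (XBp k q n l m * (Ring.inverse (XBp k q n j j) * Ring.inverse (XBp k q n m m))) := by
        rw [comm3 (D_comm hjl.ne (hjl.trans hlm).ne) _]
    _ = XBp k q n l m * (XBp k q n i j * (Ring.inverse (XBp k q n j j) * Ring.inverse (XBp k q n m m))) := by
        rw [comm3 hswap _]
    _ = XBp k q n l m * (XBp k q n i j * (Ring.inverse (XBp k q n m m) * Ring.inverse (XBp k q n j j))) := by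
        rw [DD_comm (hjl.trans hlm).ne]
    _ = XBp k q n l m * (Ring.inverse (XBp k q n m m) * (XBp k q n i j * Ring.inverse (XBp k q n j j))) := by
        rw [comm3 (D_comm (hij.trans (hjl.trans hlm)).ne' (hjl.trans hlm).ne') _]
    _ = XBp k q n l m * Ring.inverse (XBp k q n m m) * (XBp k q n i j * Ring.inverse (XBp k q n j j)) := by rw [mul_assoc]

lemma zrel5 (hq0 : q ≠ 0) {i j m : Fin (n+1)} (hij : i < j) (hjm : j < m) :
    zZ k q n i j * zZ k q n j m
      = q⁻¹ • (zZ k q n j m * zZ k q n i j) + (q⁻¹ * (q - q⁻¹)) • zZ k q n i m := by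
  simp only [zZ]
  calc XBp k q n i j * Ring.inverse (XBp k q n j j) * (XBp k q n j m * Ring.inverse (XBp k q n m m))
      = XBp k q n i j * (Ring.inverse (XBp k q n j j) * (XBp k q n j m * Ring.inverse (XBp k q n m m))) := by rw [mul_assoc]
    _ = XBp k q n i j * (q⁻¹ • (XBp k q n j m * (Ring.inverse (XBp k q n j j) * Ring.inverse (XBp k q n m m)))) := by
        rw [qcomm3 (D_row hq0 hjm) _]
    _ = q⁻¹ • (XBp k q n i j * (XBp k q n j m * (Ring.inverse (XBp k q n j j) * Ring.inverse (XBp k q n m m)))) := by rw [msc]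
    _ = q⁻¹ • (XBp k q n j m * (XBp k q n i j * (Ring.inverse (XBp k q n j j) * Ring.inverse (XBp k q n m m)))
          + (q - q⁻¹) • (XBp k q n i m * (XBp k q n j j * (Ring.inverse (XBp k q n j j) * Ring.inverse (XBp k q n m m))))) := by
        rw [mixed3 (Xmixed (k := k) (q := q) (n := n) (i := i) (l := j) (j := j) (m := m)
          hij hjm) _]
    _ = q⁻¹ • (XBp k q n j m * (XBp k q n i j * (Ring.inverse (XBp k q n j j) * Ring.inverse (XBp k q n m m))))
          + (q⁻¹ * (q - q⁻¹)) • (XBp k q n i m * (XBp k q n j j * (Ring.inverse (XBp k q n j j) * Ring.inverse (XBp k q n m m)))) := by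
        rw [smul_add, smul_smul]
    _ = q⁻¹ • (XBp k q n j m * (XBp k q n i j * (Ring.inverse (XBp k q n j j) * Ring.inverse (XBp k q n m m))))
          + (q⁻¹ * (q - q⁻¹)) • (XBp k q n i m * Ring.inverse (XBp k q n m m)) := by
        rw [XjjDD]
    _ = q⁻¹ • (XBp k q n j m * (XBp k q n i j * (Ring.inverse (XBp k q n m m) * Ring.inverse (XBp k q n j j))))
          + (q⁻¹ * (q - q⁻¹)) • (XBp k q n i m * Ring.inverse (XBp k q n m m)) := by
        rw [DD_comm hjm.ne]
    _ = q⁻¹ • (XBp k q n j m * (Ring.inverse (XBp k q n m m) * (XBp k q n i j * Ring.inverse (XBp k q n j j))))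
          + (q⁻¹ * (q - q⁻¹)) • (XBp k q n i m * Ring.inverse (XBp k q n m m)) := by
        rw [comm3 (D_comm (hij.trans hjm).ne' hjm.ne') _]
    _ = q⁻¹ • (XBp k q n j m * Ring.inverse (XBp k q n m m) * (XBp k q n i j * Ring.inverse (XBp k q n j j)))
          + (q⁻¹ * (q - q⁻¹)) • (XBp k q n i m * Ring.inverse (XBp k q n m m)) := by rw [mul_assoc]

lemma zrel6 {i l j m : Fin (n+1)} (hil : i < l) (hlj : l < j) (hjm : j < m) :
    zZ k q n i j * zZ k q n l m
      = zZ k q n l m * zZ k q n i j + (q - q⁻¹) • (zZ k q n i m * zZ k q n l j) := by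
  simp only [zZ]
  calc XBp k q n i j * Ring.inverse (XBp k q n j j) * (XBp k q n l m * Ring.inverse (XBp k q n m m))
      = XBp k q n i j * (Ring.inverse (XBp k q n j j) * (XBp k q n l m * Ring.inverse (XBp k q n m m))) := by rw [mul_assoc]
    _ = XBp k q n i j * (XBp k q n l m * (Ring.inverse (XBp k q n j j) * Ring.inverse (XBp k q n m m))) := by
        rw [comm3 (D_comm hlj.ne' hjm.ne) _]
    _ = XBp k q n l m * (XBp k q n i j * (Ring.inverse (XBp k q n j j) * Ring.inverse (XBp k q n m m)))
          + (q - q⁻¹) • (XBp k q n i m * (XBp k q n l j * (Ring.inverse (XBp k q n j j) * Ring.inverse (XBp k q n m m)))) := by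
        rw [mixed3 (Xmixed (k := k) (q := q) (n := n) (i := i) (l := l) (j := j) (m := m)
          hil hjm) _]
    _ = XBp k q n l m * (XBp k q n i j * (Ring.inverse (XBp k q n m m) * Ring.inverse (XBp k q n j j)))
          + (q - q⁻¹) • (XBp k q n i m * (XBp k q n l j * (Ring.inverse (XBp k q n m m) * Ring.inverse (XBp k q n j j)))) := by
        rw [DD_comm hjm.ne]
    _ = XBp k q n l m * (Ring.inverse (XBp k q n m m) * (XBp k q n i j * Ring.inverse (XBp k q n j j)))
          + (q - q⁻¹) • (XBp k q n i m * (Ring.inverse (XBp k q n m m) * (XBp k q n l j * Ring.inverse (XBp k q n j j)))) := by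
        rw [comm3 (D_comm ((hil.trans hlj).trans hjm).ne' hjm.ne') _,
          comm3 (D_comm (hlj.trans hjm).ne' hjm.ne') _]
    _ = XBp k q n l m * Ring.inverse (XBp k q n m m) * (XBp k q n i j * Ring.inverse (XBp k q n j j))
          + (q - q⁻¹) • (XBp k q n i m * Ring.inverse (XBp k q n m m) * (XBp k q n l j * Ring.inverse (XBp k q n j j))) := by
        rw [mul_assoc, mul_assoc]

end Aux

end QSL

open QSL in
/-- The defining relations satisfied by the elements `z i j = X_{ij}X_{jj}⁻¹` of `O_q(B⁺)`. -/
theorem z_relations (k : Type) [Field k] (q : k) (hq0 : q ≠ 0)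
    (hq : ∀ m : ℕ, 0 < m → q ^ m ≠ 1) (n : ℕ) (hn : 1 ≤ n) :
    (∀ i j m : Fin (n+1), i < j → j < m →
      zZ k q n i j * zZ k q n i m = q • (zZ k q n i m * zZ k q n i j)) ∧
    (∀ i l j : Fin (n+1), i < l → l < j →
      zZ k q n i j * zZ k q n l j = q • (zZ k q n l j * zZ k q n i j)) ∧
    (∀ i l m j : Fin (n+1), i < l → l < m → m < j →
      zZ k q n i j * zZ k q n l m = zZ k q n l m * zZ k q n i j) ∧
    (∀ i j l m : Fin (n+1), i < j → j < l → l < m →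
      zZ k q n i j * zZ k q n l m = zZ k q n l m * zZ k q n i j) ∧
    (∀ i j m : Fin (n+1), i < j → j < m →
      zZ k q n i j * zZ k q n j m =
        q⁻¹ • (zZ k q n j m * zZ k q n i j) + (q⁻¹ * (q - q⁻¹)) • zZ k q n i m) ∧
    (∀ i l j m : Fin (n+1), i < l → l < j → j < m →
      zZ k q n i j * zZ k q n l m =
        zZ k q n l m * zZ k q n i j + (q - q⁻¹) • (zZ k q n i m * zZ k q n l j)) :=
  ⟨fun _ _ _ hij hjm => zrel1 hij hjm,
   fun _ _ _ hil hlj => zrel2 hil hlj,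
   fun _ _ _ _ hil hlm hmj => zrel3 hil hlm hmj,
   fun _ _ _ _ hij hjl hlm => zrel4 hij hjl hlm,
   fun _ _ _ hij hjm => zrel5 hq0 hij hjm,
   fun _ _ _ _ hil hlj hjm => zrel6 hil hlj hjm⟩
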